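/- For each n ≥ 2 let c_n, d_n > 0 with c_n, d_n = o(log n), p_n = c_n/n ∈ (0,1), q_n = d_n/n ∈ (0,1), let the prior on Θ_n be uniform, and let θ_n ∈ Θ_n. If (c_n − d_n)²/(2(c_n + d_n)) → ∞ as n → ∞, then there exists a sequence a_n ∈ (0, 1/2) with a_n → 0 such that P_{θ_n} Π(B_n(θ_n, ⌈a_n·n⌉) | X^n) → 1, i.e. the posterior recovers the true community assignment almost-exactly with error rate k_n = ⌈a_n·n⌉ for some vanishing fraction a_n → 0. -/

import Mathlib

open Finset Real Filter

/-- The set of potential edges of an `n`-vertex graph: pairs `(i,j)` with `i < j`. -/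
abbrev Edge (n : ℕ) := {e : Fin n × Fin n // e.1 < e.2}

/-- An observed graph: an edge indicator for each potential edge. -/
abbrev ObsGraph (n : ℕ) := Edge n → Bool

/-- Edge probability under assignment `θ`: `p` within communities, `q` between. -/
noncomputable def edgeProb {n : ℕ} (p q : ℝ) (θ : Fin n → Bool) (e : Edge n) : ℝ :=
  if θ e.val.1 = θ e.val.2 then p else q

/-- Probability mass function of the observed graph under `θ`. -/
noncomputable def graphPMF {n : ℕ} (p q : ℝ) (θ : Fin n → Bool) (x : ObsGraph n) : ℝ :=
  ∏ e : Edge n, if x e then edgeProb p q θ e else 1 - edgeProb p q θ e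

/-- Hellinger affinity of Bernoulli parameters. -/
noncomputable def rho (p q : ℝ) : ℝ := Real.sqrt (p * q) + Real.sqrt ((1 - p) * (1 - q))

/-- Edges whose probability changes from `p` to `q` when replacing `θ` by `η`. -/
def D1 {n : ℕ} (θ η : Fin n → Bool) : Finset (Fin n × Fin n) :=
  Finset.univ.filter fun e => e.1 < e.2 ∧ θ e.1 = θ e.2 ∧ η e.1 ≠ η e.2

/-- Edges whose probability changes from `q` to `p` when replacing `θ` by `η`. -/
def D2 {n : ℕ} (θ η : Fin n → Bool) : Finset (Fin n × Fin n) :=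
  Finset.univ.filter fun e => e.1 < e.2 ∧ θ e.1 ≠ θ e.2 ∧ η e.1 = η e.2

/-- Hamming distance. -/
def hdist {n : ℕ} (θ η : Fin n → Bool) : ℕ := (Finset.univ.filter fun i => θ i ≠ η i).card

/-- The metric `k(θ,η) = h(θ,η) ∧ (n - h(θ,η))`. -/
def kdist {n : ℕ} (θ η : Fin n → Bool) : ℕ := min (hdist θ η) (n - hdist θ η)

/-- Size of the smallest community. -/
def countOnes {n : ℕ} (θ : Fin n → Bool) : ℕ := (Finset.univ.filter fun i => θ i = true).card

/-- The parameter space `Θ_n`. -/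
def Theta (n : ℕ) : Finset (Fin n → Bool) :=
  Finset.univ.filter fun θ => 2 * countOnes θ ≤ n ∧
    ∀ i : Fin n, 2 * countOnes θ = n → (i : ℕ) = 0 → θ i = false

/-- Posterior mass of `A ⊆ Θ_n` given data `x`, under prior mass function `π`. -/
noncomputable def postMass {n : ℕ} (p q : ℝ) (pri : (Fin n → Bool) → ℝ)
    (A : Finset (Fin n → Bool)) (x : ObsGraph n) : ℝ :=
  (∑ η ∈ A, pri η * graphPMF p q η x) / (∑ η ∈ Theta n, pri η * graphPMF p q η x)

/-- `P_θ`-expectation of the posterior mass of `A`. -/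
noncomputable def expPostMass {n : ℕ} (p q : ℝ) (pri : (Fin n → Bool) → ℝ)
    (θ : Fin n → Bool) (A : Finset (Fin n → Bool)) : ℝ :=
  ∑ x : ObsGraph n, graphPMF p q θ x * postMass p q pri A x

/-- The uniform prior on `Θ_n`. -/
noncomputable def unifPrior (n : ℕ) : (Fin n → Bool) → ℝ := fun _ => ((2:ℝ) ^ (n - 1))⁻¹

/-- Hamming ball `B_n(θ,k)` inside `Θ_n`. -/
def hball {n : ℕ} (θ : Fin n → Bool) (k : ℕ) : Finset (Fin n → Bool) :=
  (Theta n).filter fun η => kdist η θ ≤ k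

lemma sum_prod_bool {ι : Type*} [Fintype ι] [DecidableEq ι] (f : ι → Bool → ℝ) :
    ∑ x : ι → Bool, ∏ i, f i (x i) = ∏ i, (f i true + f i false) := by
  rw [← Fintype.prod_sum f]
  exact Finset.prod_congr rfl fun i _ => by rw [Fintype.sum_bool]

lemma sum_pmf {n : ℕ} {p q : ℝ} (hp : p ∈ Set.Icc (0:ℝ) 1) (hq : q ∈ Set.Icc (0:ℝ) 1)
    (θ : Fin n → Bool) : ∑ x : ObsGraph n, graphPMF p q θ x = 1 := by
  unfold graphPMF
  rw [sum_prod_bool (fun e b => if b then edgeProb p q θ e else 1 - edgeProb p q θ e)]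
  rw [Finset.prod_eq_one]
  intro e _
  simp

lemma edgeProb_mem {n : ℕ} {p q : ℝ} (hp : p ∈ Set.Icc (0:ℝ) 1) (hq : q ∈ Set.Icc (0:ℝ) 1)
    (θ : Fin n → Bool) (e : Edge n) : edgeProb p q θ e ∈ Set.Icc (0:ℝ) 1 := by
  unfold edgeProb; split <;> assumption

lemma pmf_pos {n : ℕ} {p q : ℝ} (hp : p ∈ Set.Ioo (0:ℝ) 1) (hq : q ∈ Set.Ioo (0:ℝ) 1)
    (θ : Fin n → Bool) (x : ObsGraph n) : 0 < graphPMF p q θ x := by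
  apply Finset.prod_pos
  intro e _
  have h : edgeProb p q θ e ∈ Set.Ioo (0:ℝ) 1 := by unfold edgeProb; split <;> assumption
  split
  · exact h.1
  · linarith [h.2]

lemma pmf_nonneg {n : ℕ} {p q : ℝ} (hp : p ∈ Set.Icc (0:ℝ) 1) (hq : q ∈ Set.Icc (0:ℝ) 1)
    (θ : Fin n → Bool) (x : ObsGraph n) : 0 ≤ graphPMF p q θ x := by
  apply Finset.prod_nonneg
  intro e _
  have h := edgeProb_mem hp hq θ e
  split
  · exact h.1
  · linarith [h.2]

lemma sqrt_prod' {ι : Type*} (s : Finset ι) (f : ι → ℝ) (h : ∀ i ∈ s, 0 ≤ f i) :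
    Real.sqrt (∏ i ∈ s, f i) = ∏ i ∈ s, Real.sqrt (f i) := by
  induction s using Finset.cons_induction with
  | empty => simp
  | cons a s ha ih =>
    rw [Finset.prod_cons, Finset.prod_cons, Real.sqrt_mul (h a (Finset.mem_cons_self a s)),
      ih fun i hi => h i (Finset.mem_cons_of_mem hi)]

def chg {n : ℕ} (θ η : Fin n → Bool) : Finset (Edge n) :=
  Finset.univ.filter fun e => ¬((θ e.val.1 = θ e.val.2) ↔ (η e.val.1 = η e.val.2))

lemma affinity {n : ℕ} {p q : ℝ} (hp : p ∈ Set.Icc (0:ℝ) 1) (hq : q ∈ Set.Icc (0:ℝ) 1)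
    (θ η : Fin n → Bool) :
    ∑ x : ObsGraph n, Real.sqrt (graphPMF p q θ x * graphPMF p q η x)
      = rho p q ^ (chg θ η).card := by
  have key : ∀ x : ObsGraph n, Real.sqrt (graphPMF p q θ x * graphPMF p q η x)
      = ∏ e : Edge n, Real.sqrt ((if x e then edgeProb p q θ e else 1 - edgeProb p q θ e) *
          (if x e then edgeProb p q η e else 1 - edgeProb p q η e)) := by
    intro x
    rw [graphPMF, graphPMF, ← Finset.prod_mul_distrib]
    apply sqrt_prod'
    intro e _
    have h1 := edgeProb_mem hp hq θ e
    have h2 := edgeProb_mem hp hq η e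
    split <;> nlinarith [h1.1, h1.2, h2.1, h2.2]
  rw [Finset.sum_congr rfl fun x _ => key x]
  rw [sum_prod_bool (fun e b => Real.sqrt ((if b then edgeProb p q θ e else 1 - edgeProb p q θ e) *
      (if b then edgeProb p q η e else 1 - edgeProb p q η e)))]
  have factor : ∀ e : Edge n,
      (Real.sqrt (edgeProb p q θ e * edgeProb p q η e) +
        Real.sqrt ((1 - edgeProb p q θ e) * (1 - edgeProb p q η e)))
      = if ¬((θ e.val.1 = θ e.val.2) ↔ (η e.val.1 = η e.val.2)) then rho p q else 1 := by
    intro e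
    by_cases hs : (θ e.val.1 = θ e.val.2) ↔ (η e.val.1 = η e.val.2)
    · rw [if_neg (not_not_intro hs)]
      have heq : edgeProb p q θ e = edgeProb p q η e := by
        unfold edgeProb
        by_cases h : θ e.val.1 = θ e.val.2
        · rw [if_pos h, if_pos (hs.mp h)]
        · rw [if_neg h, if_neg (fun hh => h (hs.mpr hh))]
      rw [heq]
      have h2 := edgeProb_mem hp hq η e
      rw [Real.sqrt_mul_self h2.1, Real.sqrt_mul_self (by linarith [h2.2])]
      ring
    · rw [if_pos hs]
      unfold edgeProb rho
      by_cases h : θ e.val.1 = θ e.val.2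
      · have h' : ¬(η e.val.1 = η e.val.2) := fun hh => hs ⟨fun _ => hh, fun _ => h⟩
        rw [if_pos h, if_neg h']
      · have h' : (η e.val.1 = η e.val.2) := by
          by_contra h''
          exact hs ⟨fun hh => absurd hh h, fun hh => absurd hh h''⟩
        rw [if_neg h, if_pos h', mul_comm q p, mul_comm (1-q) (1-p)]
  calc ∏ e : Edge n, _ = ∏ e : Edge n,
        (if ¬((θ e.val.1 = θ e.val.2) ↔ (η e.val.1 = η e.val.2)) then rho p q else 1) := by
        apply Finset.prod_congr rfl
        intro e _
        rw [← factor e]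
        simp
    _ = rho p q ^ (chg θ η).card := by
        rw [← Finset.prod_filter]
        exact Finset.prod_const _

lemma chg_card {n : ℕ} (θ η : Fin n → Bool) :
    (chg θ η).card = hdist θ η * (n - hdist θ η) := by
  classical
  set S : Finset (Fin n) := Finset.univ.filter fun i => θ i ≠ η i with hS
  have hScard : hdist θ η = S.card := rfl
  -- condition equivalence
  have hcond : ∀ i j : Fin n, (¬((θ i = θ j) ↔ (η i = η j))) ↔ ¬((i ∈ S) ↔ (j ∈ S)) := by
    intro i j
    simp only [hS, Finset.mem_filter, Finset.mem_univ, true_and]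
    cases hθi : θ i <;> cases hθj : θ j <;> cases hηi : η i <;> cases hηj : η j <;> simp
  -- unordered version as pairs with first coord smaller
  set T1 : Finset (Fin n × Fin n) :=
    Finset.univ.filter (fun e => e.1 < e.2 ∧ ¬((e.1 ∈ S) ↔ (e.2 ∈ S))) with hT1
  have hcard1 : (chg θ η).card = T1.card := by
    apply Finset.card_bij (fun e _ => e.val)
    · intro e he
      simp only [hT1, Finset.mem_filter, Finset.mem_univ, true_and]
      refine ⟨e.prop, ?_⟩
      rw [← hcond]
      simpa [chg] using he
    · intro e₁ _ e₂ _ h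
      exact Subtype.ext h
    · intro b hb
      simp only [hT1, Finset.mem_filter, Finset.mem_univ, true_and] at hb
      refine ⟨⟨b, hb.1⟩, ?_, rfl⟩
      simp only [chg, Finset.mem_filter, Finset.mem_univ, true_and]
      rw [hcond]
      exact hb.2
  set T2 : Finset (Fin n × Fin n) :=
    Finset.univ.filter (fun e => e.2 < e.1 ∧ ¬((e.1 ∈ S) ↔ (e.2 ∈ S))) with hT2
  have hcard2 : T1.card = T2.card := by
    apply Finset.card_bij (fun e _ => e.swap)
    · intro e he
      simp only [hT1, Finset.mem_filter, Finset.mem_univ, true_and] at he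
      simp only [hT2, Finset.mem_filter, Finset.mem_univ, true_and, Prod.swap]
      exact ⟨he.1, fun h => he.2 h.symm⟩
    · intro e₁ _ e₂ _ h
      simpa using congrArg Prod.swap h
    · intro b hb
      simp only [hT2, Finset.mem_filter, Finset.mem_univ, true_and] at hb
      refine ⟨b.swap, ?_, by simp⟩
      simp only [hT1, Finset.mem_filter, Finset.mem_univ, true_and, Prod.swap]
      exact ⟨hb.1, fun h => hb.2 h.symm⟩
  set T : Finset (Fin n × Fin n) :=
    Finset.univ.filter (fun e => ¬((e.1 ∈ S) ↔ (e.2 ∈ S))) with hT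
  have hdisj : Disjoint T1 T2 := by
    rw [Finset.disjoint_left]
    intro e h1 h2
    simp only [hT1, Finset.mem_filter] at h1
    simp only [hT2, Finset.mem_filter] at h2
    exact absurd h2.2.1 (not_lt.mpr (le_of_lt h1.2.1))
  have hunion : T1 ∪ T2 = T := by
    ext e
    simp only [hT1, hT2, hT, Finset.mem_union, Finset.mem_filter, Finset.mem_univ, true_and]
    constructor
    · rintro (⟨_, h⟩ | ⟨_, h⟩) <;> exact h
    · intro h
      have hne : e.1 ≠ e.2 := by
        intro hh
        exact h (by rw [hh])
      rcases lt_or_gt_of_ne hne with hlt | hgt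
      · exact Or.inl ⟨hlt, h⟩
      · exact Or.inr ⟨hgt, h⟩
  have hTT : T = S ×ˢ Sᶜ ∪ Sᶜ ×ˢ S := by
    ext e
    simp only [hT, Finset.mem_filter, Finset.mem_univ, true_and, Finset.mem_union,
      Finset.mem_product, Finset.mem_compl]
    tauto
  have hTdisj : Disjoint (S ×ˢ Sᶜ) (Sᶜ ×ˢ S) := by
    rw [Finset.disjoint_left]
    intro e h1 h2
    rw [Finset.mem_product] at h1 h2
    exact (Finset.mem_compl.mp h2.1) h1.1
  have hTcard : T.card = S.card * (n - S.card) + (n - S.card) * S.card := by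
    rw [hTT, Finset.card_union_of_disjoint hTdisj, Finset.card_product, Finset.card_product,
      Finset.card_compl, Fintype.card_fin]
  have : T1.card + T2.card = T.card := by
    rw [← hunion, Finset.card_union_of_disjoint hdisj]
  rw [hScard]
  rw [Nat.mul_comm (n - S.card) S.card] at hTcard
  omega

lemma sqrt_amgm {a b : ℝ} (ha : 0 ≤ a) (hb : 0 ≤ b) : Real.sqrt (a * b) ≤ (a + b) / 2 := by
  rw [show (a+b)/2 = Real.sqrt (((a+b)/2)^2) from (Real.sqrt_sq (by linarith)).symm]
  apply Real.sqrt_le_sqrt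
  nlinarith [sq_nonneg (a - b)]

lemma rho_nonneg (p q : ℝ) : 0 ≤ rho p q := add_nonneg (Real.sqrt_nonneg _) (Real.sqrt_nonneg _)

lemma rho_le {p q : ℝ} (hp : p ∈ Set.Ioo (0:ℝ) 1) (hq : q ∈ Set.Ioo (0:ℝ) 1) :
    rho p q ≤ 1 - (p - q)^2 / (4 * (p + q)) := by
  obtain ⟨hp0, hp1⟩ := hp
  obtain ⟨hq0, hq1⟩ := hq
  set u := Real.sqrt p with hu
  set v := Real.sqrt q with hv
  have hu2 : u^2 = p := Real.sq_sqrt hp0.le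
  have hv2 : v^2 = q := Real.sq_sqrt hq0.le
  have hu0 : 0 < u := Real.sqrt_pos.mpr hp0
  have hv0 : 0 < v := Real.sqrt_pos.mpr hq0
  have hsq : Real.sqrt (p * q) = u * v := Real.sqrt_mul hp0.le q
  have h1 : Real.sqrt ((1 - p) * (1 - q)) ≤ 1 - (p + q) / 2 := by
    have := sqrt_amgm (a := 1 - p) (b := 1 - q) (by linarith) (by linarith)
    linarith
  have h2 : rho p q ≤ 1 - (u - v)^2 / 2 := by
    rw [rho, hsq]
    nlinarith
  have h3 : (p - q)^2 / (4 * (p + q)) ≤ (u - v)^2 / 2 := by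
    rw [div_le_div_iff₀ (by linarith) (by norm_num)]
    have hpq : (p - q)^2 = (u - v)^2 * (u + v)^2 := by
      rw [← hu2, ← hv2]; ring
    rw [hpq]
    nlinarith [sq_nonneg (u - v), sq_nonneg (u + v), mul_nonneg (sq_nonneg (u-v)) (sq_nonneg (u-v))]
  linarith

lemma rho_le_one {p q : ℝ} (hp : p ∈ Set.Ioo (0:ℝ) 1) (hq : q ∈ Set.Ioo (0:ℝ) 1) :
    rho p q ≤ 1 := by
  have := rho_le hp hq
  have h0 : 0 ≤ (p - q)^2 / (4 * (p + q)) :=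
    div_nonneg (sq_nonneg _) (by nlinarith [hp.1, hq.1])
  linarith

lemma min_le_sqrt {a b : ℝ} (ha : 0 ≤ a) (hb : 0 ≤ b) : min a b ≤ Real.sqrt (a * b) := by
  rcases le_total a b with h | h
  · rw [min_eq_left h]
    calc a = Real.sqrt (a * a) := (Real.sqrt_mul_self ha).symm
    _ ≤ Real.sqrt (a * b) := Real.sqrt_le_sqrt (by nlinarith)
  · rw [min_eq_right h]
    calc b = Real.sqrt (b * b) := (Real.sqrt_mul_self hb).symm
    _ ≤ Real.sqrt (a * b) := Real.sqrt_le_sqrt (by nlinarith)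

lemma exp_bound {n : ℕ} {p q : ℝ} (hp : p ∈ Set.Ioo (0:ℝ) 1) (hq : q ∈ Set.Ioo (0:ℝ) 1)
    {θ : Fin n → Bool} (hθ : θ ∈ Theta n) {A : Finset (Fin n → Bool)} (hA : A ⊆ Theta n) :
    expPostMass p q (unifPrior n) θ A ≤ ∑ η ∈ A, rho p q ^ (chg θ η).card := by
  have hpI : p ∈ Set.Icc (0:ℝ) 1 := ⟨hp.1.le, hp.2.le⟩
  have hqI : q ∈ Set.Icc (0:ℝ) 1 := ⟨hq.1.le, hq.2.le⟩
  have hu : (0:ℝ) < ((2:ℝ) ^ (n - 1))⁻¹ := by positivity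
  -- pointwise bound
  have point : ∀ x : ObsGraph n, graphPMF p q θ x * postMass p q (unifPrior n) A x
      ≤ ∑ η ∈ A, min (graphPMF p q θ x) (graphPMF p q η x) := by
    intro x
    set D : ℝ := ∑ η ∈ Theta n, graphPMF p q η x with hD
    have hDθ : graphPMF p q θ x ≤ D :=
      Finset.single_le_sum (fun η _ => (pmf_pos hp hq η x).le) hθ
    have hD0 : 0 < D := lt_of_lt_of_le (pmf_pos hp hq θ x) hDθ
    have hpostEq : postMass p q (unifPrior n) A x = (∑ η ∈ A, graphPMF p q η x) / D := by
      rw [postMass, hD]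
      simp only [unifPrior]
      rw [← Finset.mul_sum, ← Finset.mul_sum, mul_div_mul_left _ _ (ne_of_gt hu)]
    rw [hpostEq, div_eq_inv_mul, ← mul_assoc, mul_comm (graphPMF p q θ x) D⁻¹, mul_assoc]
    simp only [Finset.mul_sum]
    apply Finset.sum_le_sum
    intro η hη
    have hDη : graphPMF p q η x ≤ D :=
      Finset.single_le_sum (fun η' _ => (pmf_pos hp hq η' x).le) (hA hη)
    have h1 : D⁻¹ * (graphPMF p q θ x * graphPMF p q η x) ≤ graphPMF p q η x := by
      rw [inv_mul_le_iff₀ hD0]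
      exact mul_le_mul_of_nonneg_right hDθ (pmf_pos hp hq η x).le
    have h2 : D⁻¹ * (graphPMF p q θ x * graphPMF p q η x) ≤ graphPMF p q θ x := by
      rw [inv_mul_le_iff₀ hD0, mul_comm (graphPMF p q θ x) (graphPMF p q η x)]
      exact mul_le_mul_of_nonneg_right hDη (pmf_pos hp hq θ x).le
    exact le_min h2 h1
  calc expPostMass p q (unifPrior n) θ A
      ≤ ∑ x : ObsGraph n, ∑ η ∈ A, min (graphPMF p q θ x) (graphPMF p q η x) :=
        Finset.sum_le_sum fun x _ => point x
    _ = ∑ η ∈ A, ∑ x : ObsGraph n, min (graphPMF p q θ x) (graphPMF p q η x) :=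
        Finset.sum_comm
    _ ≤ ∑ η ∈ A, ∑ x : ObsGraph n, Real.sqrt (graphPMF p q θ x * graphPMF p q η x) := by
        apply Finset.sum_le_sum
        intro η _
        apply Finset.sum_le_sum
        intro x _
        exact min_le_sqrt (pmf_pos hp hq θ x).le (pmf_pos hp hq η x).le
    _ = ∑ η ∈ A, rho p q ^ (chg θ η).card :=
        Finset.sum_congr rfl fun η _ => affinity hpI hqI θ η

lemma expPostMass_compl {n : ℕ} {p q : ℝ} (hp : p ∈ Set.Ioo (0:ℝ) 1) (hq : q ∈ Set.Ioo (0:ℝ) 1)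
    {θ : Fin n → Bool} (hθ : θ ∈ Theta n) {A : Finset (Fin n → Bool)} (hA : A ⊆ Theta n) :
    expPostMass p q (unifPrior n) θ A
      = 1 - expPostMass p q (unifPrior n) θ (Theta n \ A) := by
  have hpI : p ∈ Set.Icc (0:ℝ) 1 := ⟨hp.1.le, hp.2.le⟩
  have hqI : q ∈ Set.Icc (0:ℝ) 1 := ⟨hq.1.le, hq.2.le⟩
  have point : ∀ x : ObsGraph n,
      postMass p q (unifPrior n) A x + postMass p q (unifPrior n) (Theta n \ A) x = 1 := by
    intro x
    rw [postMass, postMass, ← add_div]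
    rw [Finset.sum_sdiff_eq_sub hA]
    have hD0 : 0 < ∑ η ∈ Theta n, unifPrior n η * graphPMF p q η x := by
      apply Finset.sum_pos'
      · intro η _
        have hu : (0:ℝ) < ((2:ℝ) ^ (n - 1))⁻¹ := by positivity
        exact (mul_pos hu (pmf_pos hp hq η x)).le
      · exact ⟨θ, hθ, by
          have hu : (0:ℝ) < ((2:ℝ) ^ (n - 1))⁻¹ := by positivity
          exact mul_pos hu (pmf_pos hp hq θ x)⟩
    rw [show ∑ η ∈ A, unifPrior n η * graphPMF p q η x +
        (∑ η ∈ Theta n, unifPrior n η * graphPMF p q η x -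
          ∑ η ∈ A, unifPrior n η * graphPMF p q η x)
        = ∑ η ∈ Theta n, unifPrior n η * graphPMF p q η x by ring]
    exact div_self (ne_of_gt hD0)
  have : expPostMass p q (unifPrior n) θ A + expPostMass p q (unifPrior n) θ (Theta n \ A)
      = 1 := by
    rw [expPostMass, expPostMass, ← Finset.sum_add_distrib]
    have hcg : ∀ x ∈ (Finset.univ : Finset (ObsGraph n)),
        graphPMF p q θ x * postMass p q (unifPrior n) A x +
          graphPMF p q θ x * postMass p q (unifPrior n) (Theta n \ A) x
        = graphPMF p q θ x := fun x _ => by rw [← mul_add, point x, mul_one]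
    rw [Finset.sum_congr rfl hcg, sum_pmf hpI hqI θ]
  linarith

lemma hdist_symm {n : ℕ} (θ η : Fin n → Bool) : hdist η θ = hdist θ η := by
  unfold hdist
  congr 1
  ext i
  simp [ne_comm]

lemma hdist_le {n : ℕ} (θ η : Fin n → Bool) : hdist θ η ≤ n := by
  simpa [hdist] using Finset.card_filter_le Finset.univ fun i => θ i ≠ η i

lemma tail_bound {n : ℕ} {p q : ℝ} (hp : p ∈ Set.Ioo (0:ℝ) 1) (hq : q ∈ Set.Ioo (0:ℝ) 1)
    {θ : Fin n → Bool} (hθ : θ ∈ Theta n) (k : ℕ) :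
    expPostMass p q (unifPrior n) θ (Theta n \ hball θ k)
      ≤ 2^n * Real.exp (-((((k:ℝ)+1) * ((n:ℝ)/2)) * ((p - q)^2 / (4 * (p + q))))) := by
  set ε : ℝ := (p - q)^2 / (4 * (p + q)) with hε
  have hε0 : 0 ≤ ε := div_nonneg (sq_nonneg _) (by nlinarith [hp.1, hq.1])
  have hρ1 : rho p q ≤ 1 - ε := rho_le hp hq
  have hρ0 : 0 ≤ rho p q := rho_nonneg p q
  have hsub : Theta n \ hball θ k ⊆ Theta n := Finset.sdiff_subset
  refine le_trans (exp_bound hp hq hθ hsub) ?_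
  set B : ℝ := Real.exp (-((((k:ℝ)+1) * ((n:ℝ)/2)) * ε)) with hB
  have hterm : ∀ η ∈ Theta n \ hball θ k, rho p q ^ (chg θ η).card ≤ B := by
    intro η hη
    have hηk : k < kdist η θ := by
      simp only [Finset.mem_sdiff, hball, Finset.mem_filter, not_and] at hη
      exact lt_of_not_ge (hη.2 hη.1)
    set h : ℕ := hdist θ η with hh
    have hkd : kdist η θ = min h (n - h) := by
      rw [kdist, hdist_symm]
    have hhn : h ≤ n := hdist_le θ η
    have hm : (chg θ η).card = h * (n - h) := chg_card θ η
    have hk1 : k + 1 ≤ h := by rw [hkd] at hηk; omega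
    have hk2 : k + 1 ≤ n - h := by rw [hkd] at hηk; omega
    have h1 : (k:ℝ) + 1 ≤ (h:ℝ) := by exact_mod_cast hk1
    have h2 : (k:ℝ) + 1 ≤ (n:ℝ) - (h:ℝ) := by
      have := (Nat.cast_le (α := ℝ)).mpr hk2
      rwa [Nat.cast_sub hhn, Nat.cast_add, Nat.cast_one] at this
    have hmR : ((chg θ η).card : ℝ) = (h:ℝ) * ((n:ℝ) - (h:ℝ)) := by
      rw [hm, Nat.cast_mul, Nat.cast_sub hhn]
    have hx0 : (0:ℝ) ≤ (h:ℝ) := Nat.cast_nonneg h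
    have hy0 : (0:ℝ) ≤ (n:ℝ) - (h:ℝ) := by linarith [h2]
    have hmbig : ((k:ℝ)+1) * ((n:ℝ)/2) ≤ ((chg θ η).card : ℝ) := by
      rw [hmR]
      nlinarith [mul_nonneg (sub_nonneg.mpr h1) hy0, mul_nonneg (sub_nonneg.mpr h2) hx0]
    have hε1 : 1 - ε ≤ Real.exp (-ε) := by
      have := Real.add_one_le_exp (-ε)
      linarith
    have h01 : (0:ℝ) ≤ 1 - ε := le_trans hρ0 hρ1
    calc rho p q ^ (chg θ η).card ≤ (1 - ε) ^ (chg θ η).card :=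
          pow_le_pow_left₀ hρ0 hρ1 _
      _ ≤ Real.exp (-ε) ^ (chg θ η).card := pow_le_pow_left₀ h01 hε1 _
      _ = Real.exp (-ε * ((chg θ η).card : ℝ)) := by
          rw [← Real.exp_nat_mul]; ring_nf
      _ ≤ B := by
          rw [hB, Real.exp_le_exp]
          nlinarith [mul_le_mul_of_nonneg_right hmbig hε0]
  have hcard : ((Theta n \ hball θ k).card : ℝ) ≤ 2^n := by
    have h1 : (Theta n \ hball θ k).card ≤ Fintype.card (Fin n → Bool) :=
      Finset.card_le_univ _
    have h2 : Fintype.card (Fin n → Bool) = 2^n := by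
      simp [Fintype.card_fun]
    rw [h2] at h1
    exact_mod_cast h1
  calc ∑ η ∈ Theta n \ hball θ k, rho p q ^ (chg θ η).card
      ≤ (Theta n \ hball θ k).card • B := Finset.sum_le_card_nsmul _ _ _ hterm
    _ = ((Theta n \ hball θ k).card : ℝ) * B := nsmul_eq_mul _ _
    _ ≤ 2^n * B := mul_le_mul_of_nonneg_right hcard (Real.exp_nonneg _)

lemma expPost_nonneg {n : ℕ} {p q : ℝ} (hp : p ∈ Set.Icc (0:ℝ) 1) (hq : q ∈ Set.Icc (0:ℝ) 1)
    (θ : Fin n → Bool) (A : Finset (Fin n → Bool)) :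
    0 ≤ expPostMass p q (unifPrior n) θ A := by
  apply Finset.sum_nonneg
  intro x _
  apply mul_nonneg (pmf_nonneg hp hq θ x)
  apply div_nonneg <;>
  · apply Finset.sum_nonneg
    intro η _
    refine mul_nonneg ?_ (pmf_nonneg hp hq η x)
    simp only [unifPrior]
    positivity


/-- if `(c_n − d_n)²/(2(c_n + d_n)) → ∞` then the posterior recovers
the true assignment almost-exactly with error rate `⌈a_n n⌉` for some vanishing
fraction `a_n → 0`. -/
theorem stmt13 (c d : ℕ → ℝ) (hc0 : ∀ n, 2 ≤ n → 0 < c n) (hd0 : ∀ n, 2 ≤ n → 0 < d n)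
    (hco : c =o[Filter.atTop] fun n : ℕ => Real.log n)
    (hdo : d =o[Filter.atTop] fun n : ℕ => Real.log n)
    (hp : ∀ n, 2 ≤ n → c n / n ∈ Set.Ioo (0:ℝ) 1)
    (hq : ∀ n, 2 ≤ n → d n / n ∈ Set.Ioo (0:ℝ) 1)
    (θ : (n : ℕ) → Fin n → Bool) (hθ : ∀ n, 2 ≤ n → θ n ∈ Theta n)
    (hcond : Filter.Tendsto (fun n : ℕ => (c n - d n)^2 / (2 * (c n + d n)))
      Filter.atTop Filter.atTop) :
    ∃ a : ℕ → ℝ, (∀ n, a n ∈ Set.Ioo (0:ℝ) (1/2)) ∧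
      Filter.Tendsto a Filter.atTop (nhds 0) ∧
      Filter.Tendsto (fun n : ℕ =>
          expPostMass (c n / n) (d n / n) (unifPrior n) (θ n)
            (hball (θ n) ⌈a n * n⌉₊))
        Filter.atTop (nhds 1) := by
  classical
  set I : ℕ → ℝ := fun n => (c n - d n)^2 / (2 * (c n + d n)) with hIdef
  set a : ℕ → ℝ := fun n => min (1/4) (6 / Real.sqrt (max 1 (I n))) with hadef
  have hsqrt_pos : ∀ n, 0 < Real.sqrt (max 1 (I n)) := fun n =>
    Real.sqrt_pos.mpr (lt_of_lt_of_le one_pos (le_max_left _ _))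
  have ha_pos : ∀ n, 0 < a n := fun n =>
    lt_min (by norm_num) (div_pos (by norm_num) (hsqrt_pos n))
  have ha_lt : ∀ n, a n < 1/2 := fun n => lt_of_le_of_lt (min_le_left _ _) (by norm_num)
  refine ⟨a, fun n => ⟨ha_pos n, ha_lt n⟩, ?_, ?_⟩
  · have hmax : Tendsto (fun n => max 1 (I n)) atTop atTop :=
      tendsto_atTop_mono (fun n => le_max_right _ _) hcond
    have hs : Tendsto (fun n => Real.sqrt (max 1 (I n))) atTop atTop := by
      rw [Filter.tendsto_atTop] at hmax ⊢
      intro b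
      filter_upwards [hmax ((max 1 b)^2)] with n hn
      have h1 : (0:ℝ) ≤ max 1 b := le_trans zero_le_one (le_max_left _ _)
      calc b ≤ max 1 b := le_max_right _ _
        _ = Real.sqrt ((max 1 b)^2) := (Real.sqrt_sq h1).symm
        _ ≤ _ := Real.sqrt_le_sqrt hn
    have hinv : Tendsto (fun n => (Real.sqrt (max 1 (I n)))⁻¹) atTop (nhds 0) :=
      hs.inv_tendsto_atTop
    have h6 : Tendsto (fun n => 6 / Real.sqrt (max 1 (I n))) atTop (nhds 0) := by
      have := hinv.const_mul (6:ℝ)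
      simpa [div_eq_mul_inv] using this
    exact squeeze_zero (fun n => (ha_pos n).le) (fun n => min_le_right _ _) h6
  · set C : ℕ → ℝ := fun n => expPostMass (c n / n) (d n / n) (unifPrior n) (θ n)
      (Theta n \ hball (θ n) ⌈a n * n⌉₊) with hCdef
    set r : ℝ := 2 * Real.exp (-36) with hr
    have hr0 : 0 ≤ r := by positivity
    have hr1 : r < 1 := by
      have h1 : Real.exp (-36) ≤ Real.exp (-1) := Real.exp_le_exp.mpr (by norm_num)
      rw [Real.exp_neg 1] at h1
      have h3 := Real.exp_one_gt_d9
      have h4 : (0:ℝ) ≤ (Real.exp 1)⁻¹ := by positivity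
      nlinarith [mul_nonneg h4 (sub_nonneg.mpr h3.le),
        inv_mul_cancel₀ (ne_of_gt (Real.exp_pos 1))]
    have hpow : Tendsto (fun n : ℕ => r ^ n) atTop (nhds 0) :=
      tendsto_pow_atTop_nhds_zero_of_lt_one hr0 hr1
    have hev : ∀ᶠ n : ℕ in atTop, 2 ≤ n ∧ 576 ≤ I n :=
      (eventually_ge_atTop 2).and (hcond.eventually_ge_atTop 576)
    have hC0 : ∀ᶠ n : ℕ in atTop, 0 ≤ C n := by
      filter_upwards [eventually_ge_atTop 2] with n hn2
      exact expPost_nonneg ⟨(hp n hn2).1.le, (hp n hn2).2.le⟩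
        ⟨(hq n hn2).1.le, (hq n hn2).2.le⟩ (θ n) _
    have hCb : ∀ᶠ n : ℕ in atTop, C n ≤ r ^ n := by
      filter_upwards [hev] with n hn
      obtain ⟨hn2, hI576⟩ := hn
      have hpn := hp n hn2
      have hqn := hq n hn2
      have hθn := hθ n hn2
      have hn0 : (0:ℝ) < n := by
        have : (2:ℝ) ≤ n := by exact_mod_cast hn2
        linarith
      have hcd : 0 < c n + d n := by linarith [hc0 n hn2, hd0 n hn2]
      have hI0 : (0:ℝ) ≤ I n := by linarith
      set s : ℝ := Real.sqrt (I n) with hsdef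
      have hs24 : (24:ℝ) ≤ s := by
        rw [hsdef, show (24:ℝ) = Real.sqrt (24^2) from (Real.sqrt_sq (by norm_num)).symm]
        exact Real.sqrt_le_sqrt (by norm_num; linarith)
      have hs0 : (0:ℝ) < s := by linarith
      have hs2 : s^2 = I n := Real.sq_sqrt hI0
      have hmaxI : max 1 (I n) = I n := max_eq_right (by linarith)
      have han : a n = 6 / s := by
        rw [hadef]
        simp only [hmaxI, ← hsdef]
        apply min_eq_right
        rw [div_le_div_iff₀ hs0 (by norm_num)]
        linarith
      set k : ℕ := ⌈a n * (n:ℝ)⌉₊ with hkdef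
      have hk : a n * (n:ℝ) ≤ (k:ℝ) := Nat.le_ceil _
      have htb := tail_bound hpn hqn hθn k
      have hεeq : (c n / n - d n / n)^2 / (4 * (c n / n + d n / n)) = I n / (2 * n) := by
        rw [hIdef]
        field_simp
        ring
      rw [hεeq] at htb
      have hexp : 36 * (n:ℝ) ≤ ((k:ℝ)+1) * ((n:ℝ)/2) * (I n / (2 * n)) := by
        have h1 : ((k:ℝ)+1) * ((n:ℝ)/2) * (I n / (2 * n)) = ((k:ℝ)+1) * I n / 4 := by
          field_simp
          ring
        rw [h1]
        have h2 : (6/s) * (n:ℝ) ≤ (k:ℝ)+1 := by rw [← han]; linarith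
        have h3 : (6/s) * (n:ℝ) * I n ≤ ((k:ℝ)+1) * I n :=
          mul_le_mul_of_nonneg_right h2 hI0
        have h4 : (6/s) * (n:ℝ) * I n = 6 * (n:ℝ) * s := by
          rw [← hs2]
          field_simp
        nlinarith [mul_le_mul_of_nonneg_left hs24 hn0.le]
      calc C n ≤ 2^n * Real.exp (-(((k:ℝ)+1) * ((n:ℝ)/2) * (I n / (2 * n)))) := htb
        _ ≤ 2^n * Real.exp (-(36 * (n:ℝ))) := by
            apply mul_le_mul_of_nonneg_left _ (by positivity)
            exact Real.exp_le_exp.mpr (by linarith)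
        _ = r ^ n := by
            rw [hr, mul_pow, ← Real.exp_nat_mul]
            congr 1
            ring
    have hCtend : Tendsto C atTop (nhds 0) := squeeze_zero' hC0 hCb hpow
    have hfinal : ∀ᶠ n : ℕ in atTop,
        expPostMass (c n / n) (d n / n) (unifPrior n) (θ n)
          (hball (θ n) ⌈a n * n⌉₊) = 1 - C n := by
      filter_upwards [eventually_ge_atTop 2] with n hn2
      exact expPostMass_compl (hp n hn2) (hq n hn2) (hθ n hn2) (Finset.filter_subset _ _)
    have hlim : Tendsto (fun n => 1 - C n) atTop (nhds 1) := by
      simpa using tendsto_const_nhds.sub hCtend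
    exact Filter.Tendsto.congr' (EventuallyEq.symm hfinal) hlim
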